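/- Let n ≥ 2, ℓ ∈ [n], and let φ: ℝ^{n×n} → ℝ^{(n−1)×(n−1)} send a matrix to its upper-left (n−1)×(n−1) submatrix. Fix T ∈ Arb(ℓ,n) and let D̄_T be the convex cone generated by {M̄_{i,j} : (i,j) ∉ E(T)} and C̄_T the convex cone generated by {φ(W^{T,e}) : e a directed edge with e ∉ E(T)}. Then: (a) for every directed edge e = (s,t) ∉ E(T) and every pair (i,j) with i ≠ j and (i,j) ∉ E(T), ⟨φ(W^{T,e}), M̄_{i,j}⟩ equals 1 if (i,j) = (s,t) and equals 0 otherwise; (b) C̄_T is the dual cone of D̄_T, i.e., C̄_T = {Y ∈ ℝ^{(n−1)×(n−1)} : ⟨X, Y⟩ ≥ 0 for all X ∈ D̄_T}. -/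

import Mathlib

open Finset

/-- The weight matrix of a directed edge `(a, b)`: `(a,b)`-entry `1`, `(b,b)`-entry `-1`. -/
def wEdge (n : ℕ) (a b : Fin n) : Matrix (Fin n) (Fin n) ℤ :=
  Matrix.single a b 1 - Matrix.single b b 1

/-- The set of `ℓ`-arborescences on `[n]`, encoded by their parent functions. -/
def arbs (n : ℕ) (ℓ : Fin n) : Finset (Fin n → Fin n) :=
  Finset.univ.filter fun p => p ℓ = ℓ ∧ ∀ v, p^[n] v = ℓ

/-- The edge set of the arborescence with parent function `p`. -/
def arbEdges (n : ℕ) (ℓ : Fin n) (p : Fin n → Fin n) : Finset (Fin n × Fin n) :=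
  Finset.univ.filter fun e => e.2 ≠ ℓ ∧ p e.2 = e.1

/-- Directed edges between distinct vertices that are not edges of the arborescence. -/
def offEdges (n : ℕ) (ℓ : Fin n) (p : Fin n → Fin n) : Finset (Fin n × Fin n) :=
  Finset.univ.filter fun e => e.1 ≠ e.2 ∧ e ∉ arbEdges n ℓ p

/-- `w^T(v)`: the sum of the weights of the edges on the path from the root to `v`. -/
def wPath (n : ℕ) (p : Fin n → Fin n) (v : Fin n) : Matrix (Fin n) (Fin n) ℤ :=
  ∑ k ∈ Finset.range n, wEdge n (p (p^[k] v)) (p^[k] v)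

/-- `W^{T,e} = w^T(s) - w^T(t) + w(e)` for `e = (s,t)`. -/
def WTE (n : ℕ) (p : Fin n → Fin n) (e : Fin n × Fin n) : Matrix (Fin n) (Fin n) ℤ :=
  wPath n p e.1 - wPath n p e.2 + wEdge n e.1 e.2

/-- `φ(W^{T,e})`: the upper-left `(n-1) × (n-1)` submatrix of `W^{T,e}`, as a real matrix. -/
def WTEbar (n : ℕ) (p : Fin n → Fin n) (e : Fin n × Fin n) :
    Matrix (Fin (n - 1)) (Fin (n - 1)) ℝ :=
  ((WTE n p e).map (Int.cast : ℤ → ℝ)).submatrix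
    (Fin.castLE (Nat.sub_le n 1)) (Fin.castLE (Nat.sub_le n 1))

/-- The real matrix `M̄_{i,j}` (for `i ≠ j` in `[n]`). -/
def Mbar (n : ℕ) (i j : Fin n) : Matrix (Fin (n - 1)) (Fin (n - 1)) ℝ :=
  Matrix.of fun a b =>
    if (a : ℕ) = (i : ℕ) ∧ (b : ℕ) = (j : ℕ) then 1
    else if (a : ℕ) = (i : ℕ) ∧ (j : ℕ) = n - 1 then -1
    else if (i : ℕ) = n - 1 ∧ (b : ℕ) = (j : ℕ) then -1
    else 0

/-- The convex cone generated by a finite family of vectors: all nonnegative combinations. -/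
def coneOf {ι : Type*} [Fintype ι] {E : Type*} [AddCommMonoid E] [Module ℝ E]
    (v : ι → E) : Set E :=
  {x | ∃ lam : ι → ℝ, (∀ k, 0 ≤ lam k) ∧ x = ∑ k, lam k • v k}

/-- Entrywise dot product of two real matrices. -/
def mdot {m k : Type*} [Fintype m] [Fintype k] (X Y : Matrix m k ℝ) : ℝ :=
  ∑ i, ∑ j, X i j * Y i j

-- auxiliary lemmas

lemma zz_wEdge_apply (n : ℕ) (a b i j : Fin n) :
    wEdge n a b i j = (if a = i ∧ b = j then 1 else 0) - (if b = i ∧ b = j then 1 else 0) := by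
  simp [wEdge, Matrix.single_apply, Matrix.sub_apply]

lemma zz_wEdge_rowsum (n : ℕ) (a b i : Fin n) :
    ∑ j, wEdge n a b i j = (if i = a then 1 else 0) - (if i = b then (1:ℤ) else 0) := by
  simp only [zz_wEdge_apply, Finset.sum_sub_distrib, ite_and]
  simp [Finset.sum_ite_eq, eq_comm]

lemma zz_wEdge_colsum (n : ℕ) (a b j : Fin n) :
    ∑ i, wEdge n a b i j = 0 := by
  simp only [zz_wEdge_apply, Finset.sum_sub_distrib]
  have h1 : ∀ (c : Fin n), ∑ i, (if c = i ∧ b = j then (1:ℤ) else 0) = if b = j then 1 else 0 := by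
    intro c; simp [ite_and, Finset.sum_ite_eq]
  rw [h1, h1, sub_self]

lemma zz_wPath_apply (n : ℕ) (p : Fin n → Fin n) (v i j : Fin n) :
    wPath n p v i j = ∑ k ∈ Finset.range n, wEdge n (p (p^[k] v)) (p^[k] v) i j := by
  unfold wPath; simp [Matrix.sum_apply]

lemma zz_wPath_rowsum (n : ℕ) (p : Fin n → Fin n) (ℓ v : Fin n) (hpn : p^[n] v = ℓ) (i : Fin n) :
    ∑ j, wPath n p v i j = (if i = ℓ then 1 else 0) - (if i = v then (1:ℤ) else 0) := by
  simp only [zz_wPath_apply]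
  rw [Finset.sum_comm]
  have : ∀ k ∈ Finset.range n, ∑ j, wEdge n (p (p^[k] v)) (p^[k] v) i j
      = (fun m => if i = p^[m] v then (1:ℤ) else 0) (k+1)
        - (fun m => if i = p^[m] v then (1:ℤ) else 0) k := by
    intro k _
    rw [zz_wEdge_rowsum]
    simp [Function.iterate_succ_apply']
  rw [Finset.sum_congr rfl this,
    Finset.sum_range_sub (fun m => if i = p^[m] v then (1:ℤ) else 0) n]
  simp [hpn]
  congr 1

lemma zz_wPath_colsum (n : ℕ) (p : Fin n → Fin n) (v j : Fin n) :
    ∑ i, wPath n p v i j = 0 := by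
  simp only [zz_wPath_apply]
  rw [Finset.sum_comm]
  exact Finset.sum_eq_zero fun k _ => zz_wEdge_colsum n _ _ j

lemma zz_WTE_rowsum (n : ℕ) (p : Fin n → Fin n) (ℓ : Fin n)
    (hpn : ∀ v, p^[n] v = ℓ) (e : Fin n × Fin n) (i : Fin n) :
    ∑ j, WTE n p e i j = 0 := by
  simp only [WTE, Matrix.add_apply, Matrix.sub_apply, Finset.sum_add_distrib,
    Finset.sum_sub_distrib]
  rw [zz_wPath_rowsum n p ℓ e.1 (hpn e.1), zz_wPath_rowsum n p ℓ e.2 (hpn e.2),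
    zz_wEdge_rowsum]
  ring

lemma zz_WTE_colsum (n : ℕ) (p : Fin n → Fin n) (e : Fin n × Fin n) (j : Fin n) :
    ∑ i, WTE n p e i j = 0 := by
  simp only [WTE, Matrix.add_apply, Matrix.sub_apply, Finset.sum_add_distrib,
    Finset.sum_sub_distrib]
  rw [zz_wPath_colsum, zz_wPath_colsum, zz_wEdge_colsum]
  ring

lemma zz_wPath_off (n : ℕ) (p : Fin n → Fin n) (ℓ : Fin n) (hpl : p ℓ = ℓ)
    (v i j : Fin n) (hij : i ≠ j) (hoff : (i, j) ∉ arbEdges n ℓ p) :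
    wPath n p v i j = 0 := by
  rw [zz_wPath_apply]
  apply Finset.sum_eq_zero
  intro k _
  rw [zz_wEdge_apply]
  have h2 : ¬ (p^[k] v = i ∧ p^[k] v = j) := by
    rintro ⟨rfl, h⟩; exact hij h
  rw [if_neg h2, sub_zero]
  rw [if_neg]
  rintro ⟨h1, h2⟩
  set u := p^[k] v
  by_cases hu : u = ℓ
  · apply hij
    rw [← h1, ← h2, hu, hpl]
  · apply hoff
    simp only [arbEdges, Finset.mem_filter, Finset.mem_univ, true_and]
    exact ⟨h2 ▸ hu, by rw [← h2, h1]⟩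

lemma zz_WTE_off (n : ℕ) (p : Fin n → Fin n) (ℓ : Fin n) (hpl : p ℓ = ℓ)
    (e f : Fin n × Fin n) (hf1 : f.1 ≠ f.2) (hf2 : f ∉ arbEdges n ℓ p) :
    WTE n p e f.1 f.2 = if f = e then 1 else 0 := by
  simp only [WTE, Matrix.add_apply, Matrix.sub_apply]
  rw [zz_wPath_off n p ℓ hpl e.1 f.1 f.2 hf1 (by simpa using hf2),
    zz_wPath_off n p ℓ hpl e.2 f.1 f.2 hf1 (by simpa using hf2)]
  rw [zz_wEdge_apply]
  have h2 : ¬ (e.2 = f.1 ∧ e.2 = f.2) := by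
    rintro ⟨h1, h2⟩; exact hf1 (h1 ▸ h2 ▸ rfl)
  rw [if_neg h2]
  have : (e.1 = f.1 ∧ e.2 = f.2) ↔ f = e := by
    constructor
    · rintro ⟨h1, h2⟩; exact Prod.ext h1.symm h2.symm
    · rintro rfl; exact ⟨rfl, rfl⟩
  simp [this]

lemma zz_sum_castLE {n : ℕ} (hn : 1 ≤ n) (f : Fin n → ℝ) :
    ∑ b : Fin (n - 1), f (Fin.castLE (Nat.sub_le n 1) b)
      = (∑ b : Fin n, f b) - f ⟨n - 1, by omega⟩ := by
  set F : ℕ → ℝ := fun k => if h : k < n then f ⟨k, h⟩ else 0 with hF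
  have h1 : ∑ b : Fin (n - 1), f (Fin.castLE (Nat.sub_le n 1) b)
      = ∑ k ∈ Finset.range (n - 1), F k := by
    rw [← Fin.sum_univ_eq_sum_range]
    refine Finset.sum_congr rfl fun b _ => ?_
    simp only [hF]
    rw [dif_pos (by omega)]
    exact congrArg f (by ext; rfl)
  have h2 : ∑ b : Fin n, f b = ∑ k ∈ Finset.range n, F k := by
    rw [← Fin.sum_univ_eq_sum_range]
    refine Finset.sum_congr rfl fun b _ => ?_
    simp only [hF]
    rw [dif_pos b.isLt]
  have h3 : Finset.range n = Finset.range ((n - 1) + 1) := by congr 1; omega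
  rw [h1, h2, h3, Finset.sum_range_succ]
  have h4 : F (n - 1) = f ⟨n - 1, by omega⟩ := by
    simp only [hF]; rw [dif_pos (by omega)]
  rw [h4]; ring

lemma zz_mdot_comm {m k : Type*} [Fintype m] [Fintype k] (X Y : Matrix m k ℝ) :
    mdot X Y = mdot Y X := by
  simp [mdot, mul_comm]

lemma zz_mdot_sum_right {m k ι : Type*} [Fintype m] [Fintype k] [Fintype ι]
    (X : Matrix m k ℝ) (c : ι → ℝ) (A : ι → Matrix m k ℝ) :
    mdot X (∑ t, c t • A t) = ∑ t, c t * mdot X (A t) := by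
  unfold mdot
  simp only [Matrix.sum_apply, Matrix.smul_apply, smul_eq_mul, Finset.mul_sum]
  have hswap : ∀ i : m, ∑ j : k, ∑ t : ι, X i j * (c t * A t i j)
      = ∑ t : ι, ∑ j : k, X i j * (c t * A t i j) :=
    fun i => Finset.sum_comm
  rw [Finset.sum_congr rfl fun i _ => hswap i, Finset.sum_comm]
  refine Finset.sum_congr rfl fun t _ => ?_
  refine Finset.sum_congr rfl fun i _ => ?_
  refine Finset.sum_congr rfl fun j _ => ?_
  ring

lemma zz_pairing (n : ℕ) (hn : 2 ≤ n) (p : Fin n → Fin n) (ℓ : Fin n)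
    (hpl : p ℓ = ℓ) (hpn : ∀ v, p^[n] v = ℓ)
    (e : Fin n × Fin n) (i j : Fin n) (hij : i ≠ j) :
    mdot (WTEbar n p e) (Mbar n i j) = ((WTE n p e i j : ℤ) : ℝ) := by
  have hn1 : 1 ≤ n := by omega
  set X : Fin n → Fin n → ℝ := fun a b => ((WTE n p e a b : ℤ) : ℝ) with hX
  have hrow : ∀ a : Fin n, ∑ b : Fin n, X a b = 0 := by
    intro a
    have h := zz_WTE_rowsum n p ℓ hpn e a
    simp only [hX]
    exact_mod_cast congrArg (Int.cast : ℤ → ℝ) h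
  have hcol : ∀ b : Fin n, ∑ a : Fin n, X a b = 0 := by
    intro b
    have h := zz_WTE_colsum n p e b
    simp only [hX]
    exact_mod_cast congrArg (Int.cast : ℤ → ℝ) h
  have hgoal : mdot (WTEbar n p e) (Mbar n i j)
      = ∑ a : Fin (n-1), ∑ b : Fin (n-1),
          X (Fin.castLE (Nat.sub_le n 1) a) (Fin.castLE (Nat.sub_le n 1) b) * Mbar n i j a b := by
    rfl
  rw [hgoal]
  show _ = X i j
  by_cases hi : (i : ℕ) = n - 1
  · by_cases hj : (j : ℕ) = n - 1
    · exact absurd (Fin.ext (hi.trans hj.symm)) hij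
    · -- Case i = n-1 : use column sum
      have hjlt : (j : ℕ) < n - 1 := by have := j.isLt; omega
      set j' : Fin (n - 1) := ⟨j, hjlt⟩ with hj'
      have hcastj : Fin.castLE (Nat.sub_le n 1) j' = j := by ext; rfl
      have hM : ∀ a b : Fin (n-1), Mbar n i j a b = if b = j' then -1 else 0 := by
        intro a b
        have ha : ¬ (a : ℕ) = (i : ℕ) := by have := a.isLt; omega
        simp only [Mbar, Matrix.of_apply]
        rw [if_neg (by tauto), if_neg (by tauto)]
        simp [hi, Fin.ext_iff, hj']
      simp only [hM, mul_ite, mul_neg_one, mul_zero]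
      rw [Finset.sum_comm]
      simp only [Finset.sum_ite_irrel, Finset.sum_const_zero, Finset.sum_ite_eq',
        Finset.mem_univ, if_true, hcastj]
      rw [Finset.sum_neg_distrib, zz_sum_castLE hn1 (fun a => X a j), hcol j]
      have : (⟨n - 1, by omega⟩ : Fin n) = i := by ext; exact hi.symm
      rw [this]; ring
  · by_cases hj : (j : ℕ) = n - 1
    · -- Case j = n-1 : use row sum
      have hilt : (i : ℕ) < n - 1 := by have := i.isLt; omega
      set i' : Fin (n - 1) := ⟨i, hilt⟩ with hi'
      have hcasti : Fin.castLE (Nat.sub_le n 1) i' = i := by ext; rfl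
      have hM : ∀ a b : Fin (n-1), Mbar n i j a b = if a = i' then -1 else 0 := by
        intro a b
        have hb : ¬ (b : ℕ) = (j : ℕ) := by have := b.isLt; omega
        simp only [Mbar, Matrix.of_apply]
        rw [if_neg (by tauto)]
        simp [hi, hj, Fin.ext_iff, hi']
      simp only [hM, mul_ite, mul_neg_one, mul_zero]
      simp only [Finset.sum_ite_irrel, Finset.sum_const_zero, Finset.sum_ite_eq',
        Finset.mem_univ, if_true, hcasti]
      rw [Finset.sum_neg_distrib, zz_sum_castLE hn1 (fun b => X i b), hrow i]
      have : (⟨n - 1, by omega⟩ : Fin n) = j := by ext; exact hj.symm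
      rw [this]; ring
    · -- generic case
      have hilt : (i : ℕ) < n - 1 := by have := i.isLt; omega
      have hjlt : (j : ℕ) < n - 1 := by have := j.isLt; omega
      set i' : Fin (n - 1) := ⟨i, hilt⟩ with hi'
      set j' : Fin (n - 1) := ⟨j, hjlt⟩ with hj'
      have hcasti : Fin.castLE (Nat.sub_le n 1) i' = i := by ext; rfl
      have hcastj : Fin.castLE (Nat.sub_le n 1) j' = j := by ext; rfl
      have hM : ∀ a b : Fin (n-1), Mbar n i j a b = if a = i' ∧ b = j' then 1 else 0 := by
        intro a b
        simp only [Mbar, Matrix.of_apply]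
        simp [hi, hj, Fin.ext_iff, hi', hj']
      simp only [hM, mul_ite, mul_one, mul_zero, ite_and]
      simp only [Finset.sum_ite_irrel, Finset.sum_const_zero, Finset.sum_ite_eq',
        Finset.mem_univ, if_true, hcasti, hcastj]

lemma zz_card_offEdges (n : ℕ) (hn : 2 ≤ n) (ℓ : Fin n) (p : Fin n → Fin n)
    (hpl : p ℓ = ℓ) (hpn : ∀ v, p^[n] v = ℓ) :
    (offEdges n ℓ p).card = (n - 1) * (n - 1) := by
  have hinj : Function.Injective (fun t : Fin n => (p t, t)) := by
    intro a b h
    exact congrArg Prod.snd h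
  have harb : arbEdges n ℓ p = (Finset.univ.erase ℓ).image (fun t => (p t, t)) := by
    ext e
    simp only [arbEdges, Finset.mem_filter, Finset.mem_univ, true_and, Finset.mem_image,
      Finset.mem_erase]
    constructor
    · rintro ⟨h1, h2⟩
      exact ⟨e.2, ⟨h1, trivial⟩, Prod.ext h2 rfl⟩
    · rintro ⟨t, ⟨ht, -⟩, rfl⟩
      exact ⟨ht, rfl⟩
  have hcardArb : (arbEdges n ℓ p).card = n - 1 := by
    rw [harb, Finset.card_image_of_injective _ hinj, Finset.card_erase_of_mem (Finset.mem_univ _)]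
    simp
  have hne : ∀ e ∈ arbEdges n ℓ p, e.1 ≠ e.2 := by
    intro e he
    simp only [arbEdges, Finset.mem_filter, Finset.mem_univ, true_and] at he
    intro h
    apply he.1
    have hfix : p e.2 = e.2 := by rw [he.2, h]
    rw [← hpn e.2, Function.iterate_fixed hfix]
  have hsub : arbEdges n ℓ p ⊆ Finset.univ.filter (fun e : Fin n × Fin n => e.1 ≠ e.2) := by
    intro e he
    simp only [Finset.mem_filter, Finset.mem_univ, true_and]
    exact hne e he
  have hoff : offEdges n ℓ p = Finset.univ.filter (fun e : Fin n × Fin n => e.1 ≠ e.2) \ arbEdges n ℓ p := by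
    ext e
    simp only [offEdges, Finset.mem_filter, Finset.mem_univ, true_and, Finset.mem_sdiff]
  have hdiag : (Finset.univ.filter (fun e : Fin n × Fin n => e.1 ≠ e.2)).card = n * n - n := by
    have h1 : (Finset.univ.filter (fun e : Fin n × Fin n => e.1 ≠ e.2))
        = Finset.univ \ (Finset.univ.image (fun a : Fin n => (a, a))) := by
      ext e
      simp only [Finset.mem_filter, Finset.mem_univ, true_and, Finset.mem_sdiff,
        Finset.mem_image]
      constructor
      · intro h
        rintro ⟨a, rfl⟩
        exact h rfl
      · intro h hcontra
        exact h ⟨e.1, Prod.ext rfl hcontra⟩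
    rw [h1, Finset.card_sdiff_of_subset (Finset.subset_univ _),
      Finset.card_image_of_injective _ (fun a b h => congrArg Prod.snd h)]
    simp [Finset.card_univ]
  rw [hoff, Finset.card_sdiff_of_subset hsub, hdiag, hcardArb]
  have hb1 : n ≤ n * n := Nat.le_mul_of_pos_left n (by omega)
  have hb2 : 2 * n ≤ n * n := by nlinarith
  have hb0 : n - 1 + n ≤ 2 * n := by omega
  have hb3 : n - 1 ≤ n * n - n := Nat.le_sub_of_add_le (le_trans hb0 hb2)
  zify [hb1, hb3, show 1 ≤ n by omega]
  ring

theorem stmt12 (n : ℕ) (hn : 2 ≤ n) (ℓ : Fin n) (p : Fin n → Fin n)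
    (hp : p ∈ arbs n ℓ) :
    (∀ e ∈ offEdges n ℓ p, ∀ f ∈ offEdges n ℓ p,
      mdot (WTEbar n p e) (Mbar n f.1 f.2) = if f = e then 1 else 0) ∧
    (coneOf fun e : {e : Fin n × Fin n // e ∈ offEdges n ℓ p} => WTEbar n p e.1) =
      {Y | ∀ X ∈ coneOf fun e : {e : Fin n × Fin n // e ∈ offEdges n ℓ p} =>
          Mbar n e.1.1 e.1.2, 0 ≤ mdot X Y} := by
  obtain ⟨hpl, hpn⟩ := (Finset.mem_filter.mp hp).2
  have hoffne : ∀ f ∈ offEdges n ℓ p, f.1 ≠ f.2 ∧ f ∉ arbEdges n ℓ p := by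
    intro f hf
    simpa [offEdges] using hf
  have partA : ∀ e ∈ offEdges n ℓ p, ∀ f ∈ offEdges n ℓ p,
      mdot (WTEbar n p e) (Mbar n f.1 f.2) = if f = e then 1 else 0 := by
    intro e he f hf
    obtain ⟨hf1, hf2⟩ := hoffne f hf
    rw [zz_pairing n hn p ℓ hpl hpn e f.1 f.2 hf1,
      zz_WTE_off n p ℓ hpl e f hf1 hf2]
    split <;> simp
  refine ⟨partA, ?_⟩
  have hcard : Fintype.card {e : Fin n × Fin n // e ∈ offEdges n ℓ p} = (n - 1) * (n - 1) := by
    rw [Fintype.card_coe, zz_card_offEdges n hn ℓ p hpl hpn]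
  have hpos : 0 < Fintype.card {e : Fin n × Fin n // e ∈ offEdges n ℓ p} := by
    rw [hcard]
    have h1 : 1 ≤ n - 1 := by omega
    exact Nat.mul_pos h1 h1
  have hnee : Nonempty {e : Fin n × Fin n // e ∈ offEdges n ℓ p} :=
    Fintype.card_pos_iff.mp hpos
  have hdelta : ∀ f e : {e : Fin n × Fin n // e ∈ offEdges n ℓ p},
      mdot (Mbar n f.1.1 f.1.2) (WTEbar n p e.1) = if f = e then 1 else 0 := by
    intro f e
    rw [zz_mdot_comm, partA e.1 e.2 f.1 f.2]
    by_cases h : f = e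
    · simp [h]
    · rw [if_neg (fun hh => h (Subtype.ext hh)), if_neg h]
  have hpick : ∀ (f : {e : Fin n × Fin n // e ∈ offEdges n ℓ p})
      (c : {e : Fin n × Fin n // e ∈ offEdges n ℓ p} → ℝ),
      mdot (Mbar n f.1.1 f.1.2) (∑ e, c e • WTEbar n p e.1) = c f := by
    intro f c
    rw [zz_mdot_sum_right]
    have h1 : ∀ e : {e : Fin n × Fin n // e ∈ offEdges n ℓ p},
        c e * mdot (Mbar n f.1.1 f.1.2) (WTEbar n p e.1)
        = if f = e then c e else 0 := by
      intro e
      rw [hdelta f e]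
      split <;> simp
    rw [Finset.sum_congr rfl fun e _ => h1 e, Finset.sum_ite_eq Finset.univ f c,
      if_pos (Finset.mem_univ f)]
  have li : LinearIndependent ℝ
      (fun e : {e : Fin n × Fin n // e ∈ offEdges n ℓ p} => WTEbar n p e.1) := by
    rw [Fintype.linearIndependent_iff]
    intro g hg f
    have h2 := hpick f g
    rw [hg] at h2
    simpa [mdot] using h2.symm
  have hrank : Fintype.card {e : Fin n × Fin n // e ∈ offEdges n ℓ p}
      = Module.finrank ℝ (Matrix (Fin (n-1)) (Fin (n-1)) ℝ) := by
    rw [hcard, Module.finrank_matrix]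
    simp
  have hspan := li.span_eq_top_of_card_eq_finrank hrank
  ext Y
  constructor
  · rintro ⟨lam, hlam, rfl⟩ X hX
    obtain ⟨mu, hmu, rfl⟩ := hX
    rw [zz_mdot_comm, zz_mdot_sum_right]
    apply Finset.sum_nonneg
    intro e _
    apply mul_nonneg (hmu e)
    rw [zz_mdot_comm, hpick]
    exact hlam e
  · intro hY
    have hmem : Y ∈ Submodule.span ℝ
        (Set.range fun e : {e : Fin n × Fin n // e ∈ offEdges n ℓ p} => WTEbar n p e.1) := by
      rw [hspan]; trivial
    obtain ⟨c, hc⟩ := (Submodule.mem_span_range_iff_exists_fun ℝ).mp hmem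
    refine ⟨c, ?_, hc.symm⟩
    intro f
    have hXmem : Mbar n f.1.1 f.1.2 ∈ coneOf
        (fun e : {e : Fin n × Fin n // e ∈ offEdges n ℓ p} => Mbar n e.1.1 e.1.2) := by
      refine ⟨fun e => if e = f then 1 else 0, fun e => by dsimp only; split <;> norm_num, ?_⟩
      have h3 : ∀ e : {e : Fin n × Fin n // e ∈ offEdges n ℓ p},
          (if e = f then (1:ℝ) else 0) • Mbar n e.1.1 e.1.2
          = if e = f then Mbar n e.1.1 e.1.2 else 0 := fun e => by split <;> simp
      symm
      rw [Finset.sum_congr rfl fun e _ => h3 e, Finset.sum_ite_eq' Finset.univ f _,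
        if_pos (Finset.mem_univ f)]
    have h4 := hY _ hXmem
    rw [← hc, hpick] at h4
    exact h4
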